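/- Let F be a finite field of order Q and let C be a Reed–Solomon code of length n, dimension k, rate R = k/n. Fix ε > 0 and let ℓ = ⌈Q/(2εn√R)⌉. If Q is sufficiently large (relative to ε and R), then for every z ∈ F^n and every set L of ℓ+1 distinct codewords, the average relative Hamming distance (1/(ℓ+1))·Σ_{c∈L} δ(c,z) exceeds 1 − √R − ε, i.e., C is (1−√R−ε, ℓ)-average-radius list-decodable. -/

import Mathlib

open Finset

/-- Evaluation of the polynomial with coefficient vector `c` (degree `< k`) at `x`. -/
def evalc {F : Type*} [CommSemiring F] {k : ℕ} (c : Fin k → F) (x : F) : F :=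
  ∑ i : Fin k, c i * x ^ (i : ℕ)

/-- Relative Hamming distance between two words of length `n`. -/
noncomputable def relHamming {F : Type*} [DecidableEq F] {n : ℕ} (x y : Fin n → F) : ℝ :=
  ((Finset.univ.filter (fun i : Fin n => x i ≠ y i)).card : ℝ) / n

lemma agree_le {F : Type} [Field F] [DecidableEq F] {n k : ℕ}
    {α : Fin n → F} (hα : Function.Injective α) {f g : Fin k → F} (hfg : f ≠ g) :
    (univ.filter (fun i : Fin n => evalc f (α i) = evalc g (α i))).card ≤ k - 1 := by
  set p : Polynomial F := ∑ i : Fin k, Polynomial.C (f i - g i) * Polynomial.X ^ (i : ℕ) with hp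
  have hcoeff : ∀ j : Fin k, p.coeff (j : ℕ) = f j - g j := by
    intro j
    rw [hp, Polynomial.finset_sum_coeff]
    rw [Finset.sum_eq_single j]
    · rw [Polynomial.coeff_C_mul, Polynomial.coeff_X_pow, if_pos rfl, mul_one]
    · intro b _ hb
      rw [Polynomial.coeff_C_mul, Polynomial.coeff_X_pow,
        if_neg (by simpa [Fin.val_eq_val] using Ne.symm hb)]
      ring
    · simp
  have hpne : p ≠ 0 := by
    intro h
    apply hfg
    funext j
    have := hcoeff j
    rw [h] at this
    simp at this
    linear_combination (norm := ring_nf) this.symm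
  have hdeg : p.natDegree ≤ k - 1 := by
    apply Polynomial.natDegree_sum_le_of_forall_le
    intro i _
    have h1 := Polynomial.natDegree_C_mul_le (f i - g i) (Polynomial.X ^ (i:ℕ))
    simp only [Polynomial.natDegree_X_pow] at h1
    exact h1.trans (Nat.le_sub_one_of_lt i.isLt)
  have heval : ∀ x, p.eval x = evalc f x - evalc g x := by
    intro x
    simp [hp, evalc, Polynomial.eval_finset_sum, sub_mul, Finset.sum_sub_distrib]
  calc (univ.filter (fun i : Fin n => evalc f (α i) = evalc g (α i))).card
      ≤ p.roots.toFinset.card := by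
        apply Finset.card_le_card_of_injOn (fun i => α i)
        · intro i hi
          simp only [Finset.mem_coe, mem_filter] at hi
          simp only [Finset.mem_coe, Multiset.mem_toFinset, Polynomial.mem_roots hpne]
          rw [Polynomial.IsRoot, heval]
          exact sub_eq_zero_of_eq hi.2
        · exact fun a _ b _ h => hα h
    _ ≤ Multiset.card p.roots := p.roots.toFinset_card_le
    _ ≤ p.natDegree := p.card_roots'
    _ ≤ k - 1 := hdeg

/-- Abstract second-moment counting lemma. -/
lemma key_aux {β : Type*} [DecidableEq β] {n : ℕ} (L : Finset β) (P : β → Fin n → Prop)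
    [∀ f i, Decidable (P f i)] (d : ℕ)
    (hd : ∀ f ∈ L, ∀ g ∈ L, f ≠ g → (univ.filter fun i => P f i ∧ P g i).card ≤ d) :
    ∑ i : Fin n, ((L.filter fun f => P f i).card) ^ 2
      ≤ (∑ f ∈ L, (univ.filter fun i => P f i).card) + L.card * (L.card - 1) * d := by
  have expand : ∑ i : Fin n, ((L.filter fun f => P f i).card) ^ 2
      = ∑ f ∈ L, ∑ g ∈ L, (univ.filter fun i : Fin n => P f i ∧ P g i).card := by
    simp only [sq, Finset.card_filter, Finset.sum_mul_sum]
    rw [Finset.sum_comm]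
    refine Finset.sum_congr rfl fun f _ => ?_
    rw [Finset.sum_comm]
    refine Finset.sum_congr rfl fun g _ => ?_
    refine Finset.sum_congr rfl fun i _ => ?_
    by_cases h1 : P f i <;> by_cases h2 : P g i <;> simp [h1, h2]
  rw [expand]
  have hsplit : ∀ f ∈ L, ∑ g ∈ L, (univ.filter fun i : Fin n => P f i ∧ P g i).card
      ≤ (univ.filter fun i : Fin n => P f i).card + (L.card - 1) * d := by
    intro f hf
    rw [← Finset.add_sum_erase _ _ hf]
    gcongr
    · simp
    · calc ∑ g ∈ L.erase f, (univ.filter fun i : Fin n => P f i ∧ P g i).card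
          ≤ ∑ _g ∈ L.erase f, d :=
            Finset.sum_le_sum fun g hg =>
              hd f hf g (Finset.mem_of_mem_erase hg) (Ne.symm (Finset.ne_of_mem_erase hg))
      _ = (L.card - 1) * d := by rw [Finset.sum_const, smul_eq_mul, Finset.card_erase_of_mem hf]
  calc ∑ f ∈ L, ∑ g ∈ L, (univ.filter fun i : Fin n => P f i ∧ P g i).card
      ≤ ∑ f ∈ L, ((univ.filter fun i : Fin n => P f i).card + (L.card - 1) * d) :=
        Finset.sum_le_sum hsplit
    _ = (∑ f ∈ L, (univ.filter fun i : Fin n => P f i).card) + L.card * ((L.card - 1) * d) := by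
        rw [Finset.sum_add_distrib, Finset.sum_const, smul_eq_mul]
    _ = (∑ f ∈ L, (univ.filter fun i : Fin n => P f i).card) + L.card * (L.card - 1) * d := by
        ring

set_option maxHeartbeats 1000000 in
theorem stmt15 (ε R : ℝ) (hε : 0 < ε) (hR : 0 < R) (hR1 : R ≤ 1) :
    ∃ Q₀ : ℕ, ∀ (F : Type) (_ : Field F) (_ : Fintype F) (_ : DecidableEq F)
      (n k : ℕ) (_ : 0 < k) (_ : k ≤ n)
      (α : Fin n → F) (_ : Function.Injective α),
      Q₀ ≤ Fintype.card F →
      (k : ℝ) / n = R →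
      ∀ (z : Fin n → F) (L : Finset (Fin k → F)),
        L.card = ⌈(Fintype.card F : ℝ) / (2 * ε * n * Real.sqrt R)⌉₊ + 1 →
        (1 / ((L.card : ℝ))) *
            ∑ f ∈ L, relHamming (fun i => evalc f (α i)) z
          > 1 - Real.sqrt R - ε := by
  refine ⟨0, ?_⟩
  intro F _ _ _ n k hk hkn α hα _ hRdef z L hL
  have hsR : 0 < Real.sqrt R := Real.sqrt_pos.mpr hR
  have hn : 0 < n := hk.trans_le hkn
  have hnQ : n ≤ Fintype.card F := by simpa using Fintype.card_le_of_injective α hα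
  have hL2 : 2 ≤ L.card := by
    rw [hL]
    have : 0 < ⌈(Fintype.card F : ℝ) / (2 * ε * n * Real.sqrt R)⌉₊ := by
      rw [Nat.ceil_pos]
      have h0 : (0:ℝ) < (Fintype.card F : ℝ) := by
        exact_mod_cast Nat.lt_of_lt_of_le hn hnQ
      have h1 : (0:ℝ) < (n:ℝ) := by exact_mod_cast hn
      positivity
    omega
  set a : (Fin k → F) → ℕ := fun f => (univ.filter fun i : Fin n => evalc f (α i) = z i).card
    with ha
  set m : Fin n → ℕ := fun i => (L.filter fun f => evalc f (α i) = z i).card with hm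
  have hS : ∑ f ∈ L, a f = ∑ i : Fin n, m i := by
    simp only [ha, hm, Finset.card_filter]
    exact Finset.sum_comm
  have key : ∑ i : Fin n, m i ^ 2 ≤ (∑ f ∈ L, a f) + L.card * (L.card - 1) * (k - 1) := by
    refine key_aux L (fun f i => evalc f (α i) = z i) (k - 1) ?_
    intro f _ g _ hfg
    calc (univ.filter fun i : Fin n => evalc f (α i) = z i ∧ evalc g (α i) = z i).card
        ≤ (univ.filter fun i : Fin n => evalc f (α i) = evalc g (α i)).card := by
          apply Finset.card_le_card
          intro i hi
          simp only [mem_filter, mem_univ, true_and] at hi ⊢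
          rw [hi.1, hi.2]
      _ ≤ k - 1 := agree_le hα hfg
  -- real quantities
  set N : ℝ := (n : ℝ) with hN
  set M : ℝ := (L.card : ℝ) with hM
  set S : ℝ := ((∑ i : Fin n, m i : ℕ) : ℝ) with hSr
  have hNpos : (0:ℝ) < N := by rw [hN]; exact_mod_cast hn
  have hMpos : (0:ℝ) < M := by rw [hM]; exact_mod_cast Nat.lt_of_lt_of_le Nat.zero_lt_two hL2
  have hM2 : (2:ℝ) ≤ M := by rw [hM]; exact_mod_cast hL2
  have hSpos : (0:ℝ) ≤ S := Nat.cast_nonneg _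
  have hKN : (k : ℝ) = R * N := by
    rw [hN]
    field_simp at hRdef
    linarith [hRdef]
  have hkR : (0:ℝ) < (k:ℝ) := by exact_mod_cast hk
  -- Cauchy-Schwarz
  have hCS : S ^ 2 ≤ N * ∑ i : Fin n, (m i : ℝ) ^ 2 := by
    have h := sq_sum_le_card_mul_sum_sq (s := (univ : Finset (Fin n))) (f := fun i => (m i : ℝ))
    rw [hSr, hN]
    push_cast
    simpa using h
  have hkey : ∑ i : Fin n, (m i : ℝ) ^ 2 ≤ S + M * (M - 1) * ((k:ℝ) - 1) := by
    have h1 : ∑ i : Fin n, m i ^ 2 ≤ (∑ i : Fin n, m i) + L.card * (L.card - 1) * (k - 1) := by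
      rw [← hS]; exact key
    have h2 : ((∑ i : Fin n, m i ^ 2 : ℕ) : ℝ)
        ≤ (((∑ i : Fin n, m i) + L.card * (L.card - 1) * (k - 1) : ℕ) : ℝ) := Nat.cast_le.mpr h1
    rw [hSr, hM]
    push_cast [Nat.cast_sub (show 1 ≤ L.card by omega), Nat.cast_sub hk] at h2 ⊢
    linarith [h2]
  have hSle : S ≤ N * M := by
    rw [hSr]
    push_cast
    calc ∑ i : Fin n, (m i : ℝ) ≤ ∑ _i : Fin n, M := by
          refine Finset.sum_le_sum fun i _ => ?_
          rw [hM]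
          exact_mod_cast Finset.card_filter_le _ _
      _ = N * M := by rw [Finset.sum_const, Finset.card_univ, Fintype.card_fin, nsmul_eq_mul, hN]
  -- list size bound
  have hMlb : 1 < M * (2 * ε * Real.sqrt R) := by
    have h2 : (0:ℝ) < 2 * ε * Real.sqrt R := by positivity
    have hn' : (0:ℝ) < (n:ℝ) := by exact_mod_cast hn
    have hQn' : (n:ℝ) ≤ (Fintype.card F:ℝ) := by exact_mod_cast hnQ
    have hceil := Nat.le_ceil ((Fintype.card F : ℝ) / (2 * ε * n * Real.sqrt R))
    have hM1 : (⌈(Fintype.card F : ℝ) / (2 * ε * n * Real.sqrt R)⌉₊ : ℝ) + 1 = M := by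
      rw [hM, hL]; push_cast; ring
    have hfrac : (1:ℝ) / (2 * ε * Real.sqrt R)
        ≤ (Fintype.card F : ℝ) / (2 * ε * n * Real.sqrt R) := by
      rw [div_le_div_iff₀ h2 (by positivity)]
      nlinarith
    have hlt : 1 / (2 * ε * Real.sqrt R) < M := by linarith
    calc (1:ℝ) = (1 / (2 * ε * Real.sqrt R)) * (2 * ε * Real.sqrt R) := by field_simp
      _ < M * (2 * ε * Real.sqrt R) := mul_lt_mul_of_pos_right hlt h2
  -- main quadratic chain
  have hE : S ^ 2 < N * S + N * M * (M - 1) * (k:ℝ) := by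
    have h1 : S ^ 2 ≤ N * (S + M * (M - 1) * ((k:ℝ) - 1)) :=
      hCS.trans (mul_le_mul_of_nonneg_left hkey hNpos.le)
    nlinarith
  have hmain : S ^ 2 < ((Real.sqrt R + ε) * (N * M)) ^ 2 := by
    have hsq : Real.sqrt R ^ 2 = R := Real.sq_sqrt hR.le
    rw [hKN] at hE
    have s1 : N * S ≤ N * (N * M) := mul_le_mul_of_nonneg_left hSle hNpos.le
    have s2 : S ^ 2 < (1 + (M - 1) * R) * (N ^ 2 * M) := by linarith [hE, s1]
    have s4 : 1 + (M - 1) * R ≤ (R + 2 * ε * Real.sqrt R + ε ^ 2) * M := by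
      have hq : 0 ≤ ε ^ 2 * M := mul_nonneg (sq_nonneg ε) hMpos.le
      linarith [hMlb, hR, hq]
    have s5 : (1 + (M - 1) * R) * (N ^ 2 * M)
        ≤ ((R + 2 * ε * Real.sqrt R + ε ^ 2) * M) * (N ^ 2 * M) :=
      mul_le_mul_of_nonneg_right s4 (mul_nonneg (sq_nonneg N) hMpos.le)
    have hgoal : ((Real.sqrt R + ε) * (N * M)) ^ 2
        = ((R + 2 * ε * Real.sqrt R + ε ^ 2) * M) * (N ^ 2 * M) := by
      linear_combination (N ^ 2 * M ^ 2) * hsq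
    rw [hgoal]
    linarith [s2, s5]
  have hSlt : S < (Real.sqrt R + ε) * (N * M) := by
    have hT : (0:ℝ) < (Real.sqrt R + ε) * (N * M) := mul_pos (add_pos hsR hε) (mul_pos hNpos hMpos)
    nlinarith
  -- average distance computation
  have hd : ∀ f : Fin k → F, relHamming (fun i => evalc f (α i)) z = (N - (a f : ℝ)) / N := by
    intro f
    have hb := Finset.card_filter_add_card_filter_not
      (s := (univ : Finset (Fin n))) (p := fun i => evalc f (α i) = z i)
    simp only [Finset.card_univ, Fintype.card_fin] at hb
    have hle : a f ≤ n := by rw [ha]; simpa using Finset.card_filter_le (univ : Finset (Fin n)) (fun i => evalc f (α i) = z i)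
    have hcard : (univ.filter fun i : Fin n => evalc f (α i) ≠ z i).card = n - a f := by
      simp only [ne_eq, ha]
      omega
    rw [relHamming, hcard, Nat.cast_sub hle, hN]
  have hsum : ∑ f ∈ L, relHamming (fun i => evalc f (α i)) z = M - S / N := by
    rw [Finset.sum_congr rfl fun f _ => hd f, ← Finset.sum_div, Finset.sum_sub_distrib,
      Finset.sum_const, nsmul_eq_mul]
    have h1 : ∑ x ∈ L, ((a x : ℝ)) = S := by rw [hSr, ← hS]; push_cast; rfl
    rw [h1, hM]
    field_simp
    try ring
  rw [hsum]
  have heq : 1 / M * (M - S / N) = 1 - S / (N * M) := by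
    field_simp
  rw [heq]
  have hfin : S / (N * M) < Real.sqrt R + ε := by
    rw [div_lt_iff₀ (mul_pos hNpos hMpos)]
    linarith [hSlt]
  linarith
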